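/- Let n ≥ 1 and let A, B ∈ Mₙ(ℂ) satisfy A†A + BᵗB̄ = 1, A†B = BᵗĀ, AA† + BB† = 1, and ABᵗ = BAᵗ (equivalently, the 2n×2n block matrix [[A, B],[−B̄, Ā]] lies in the compact symplectic group Sp(n) = Sp(2n,ℂ) ∩ U(2n)). Let Λ be a real diagonal n×n matrix whose diagonal entries λ̃ᵢ all satisfy −1/2 < λ̃ᵢ < 1/2, and assume AA† = (1/2)·1 + Λ. Then there exists an n×n complex unitary matrix k with kΛ = Λk such that ABᵗ = k·D·kᵗ, where D is the real diagonal matrix with entries √(1/4 − λ̃ᵢ²). -/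

import Mathlib

open Matrix Polynomial

namespace Stmt9Aux

variable {n : ℕ}

/-- support condition wrt the level function `l` -/
def Supp (l : Fin n → ℝ) (M : Matrix (Fin n) (Fin n) ℂ) : Prop :=
  ∀ i j, l i ≠ l j → M i j = 0

variable {l : Fin n → ℝ}

lemma supp_one : Supp l (1 : Matrix (Fin n) (Fin n) ℂ) := by
  intro i j hij
  have : i ≠ j := fun h => hij (by rw [h])
  simp [Matrix.one_apply_ne this]

lemma supp_diagonal (g : Fin n → ℂ) : Supp l (Matrix.diagonal g) := by
  intro i j hij
  have : i ≠ j := fun h => hij (by rw [h])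
  simp [Matrix.diagonal_apply_ne _ this]

lemma supp_add {M N : Matrix (Fin n) (Fin n) ℂ} (hM : Supp l M) (hN : Supp l N) :
    Supp l (M + N) := fun i j hij => by
  simp [Matrix.add_apply, hM i j hij, hN i j hij]

lemma supp_mul {M N : Matrix (Fin n) (Fin n) ℂ} (hM : Supp l M) (hN : Supp l N) :
    Supp l (M * N) := by
  intro i j hij
  rw [Matrix.mul_apply]
  apply Finset.sum_eq_zero
  intro k _
  by_cases hk : l i = l k
  · rw [hN k j (hk ▸ hij), mul_zero]
  · rw [hM i k hk, zero_mul]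

lemma supp_smul {M : Matrix (Fin n) (Fin n) ℂ} (c : ℂ) (hM : Supp l M) :
    Supp l (c • M) := fun i j hij => by
  simp [Matrix.smul_apply, hM i j hij]

lemma supp_transpose {M : Matrix (Fin n) (Fin n) ℂ} (hM : Supp l M) :
    Supp l Mᵀ := fun i j hij => by
  simp [Matrix.transpose_apply, hM j i (Ne.symm hij)]

lemma supp_conjTranspose {M : Matrix (Fin n) (Fin n) ℂ} (hM : Supp l M) :
    Supp l Mᴴ := fun i j hij => by
  simp [Matrix.conjTranspose_apply, hM j i (Ne.symm hij)]

lemma supp_commute {M : Matrix (Fin n) (Fin n) ℂ} (hM : Supp l M) (g : Fin n → ℂ)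
    (hg : ∀ i j, l i = l j → g i = g j) :
    M * Matrix.diagonal g = Matrix.diagonal g * M := by
  ext i j
  rw [Matrix.mul_diagonal, Matrix.diagonal_mul]
  by_cases hij : l i = l j
  · rw [hg i j hij, mul_comm]
  · rw [hM i j hij, mul_zero, zero_mul]

lemma supp_of_commute {M : Matrix (Fin n) (Fin n) ℂ} (g : Fin n → ℂ)
    (hg : ∀ i j, l i ≠ l j → g i ≠ g j)
    (h : M * Matrix.diagonal g = Matrix.diagonal g * M) : Supp l M := by
  intro i j hij
  have := congrFun (congrFun h i) j
  rw [Matrix.mul_diagonal, Matrix.diagonal_mul] at this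
  have h2 : M i j * (g j - g i) = 0 := by ring_nf; linear_combination this
  rcases mul_eq_zero.mp h2 with h3 | h3
  · exact h3
  · exact absurd (by linear_combination h3 : g j = g i) (hg i j hij).symm

/-- Cayley-type map into the unit circle -/
noncomputable def cay (t : ℝ) : ℂ := (1 + t * Complex.I) / (1 - t * Complex.I)

lemma cay_den_ne_zero (t : ℝ) : (1 - (t : ℂ) * Complex.I) ≠ 0 := by
  intro h
  have := congrArg Complex.re h
  simp at this

lemma cay_num_ne_zero (t : ℝ) : (1 + (t : ℂ) * Complex.I) ≠ 0 := by
  intro h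
  have := congrArg Complex.re h
  simp at this

lemma cay_mul_conj (t : ℝ) : cay t * (starRingEnd ℂ) (cay t) = 1 := by
  unfold cay
  rw [map_div₀]
  simp only [map_add, map_sub, _root_.map_one, _root_.map_mul, Complex.conj_ofReal, Complex.conj_I]
  field_simp [cay_den_ne_zero t, cay_num_ne_zero t]
  ring

lemma cay_injective : Function.Injective cay := by
  intro s t h
  unfold cay at h
  rw [div_eq_div_iff (cay_den_ne_zero s) (cay_den_ne_zero t)] at h
  have h2 : ((s : ℂ) - t) * (2 * Complex.I) = 0 := by linear_combination h
  rcases mul_eq_zero.mp h2 with h3 | h3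
  · exact_mod_cast sub_eq_zero.mp h3
  · simp [Complex.I_ne_zero] at h3

end Stmt9Aux

namespace Stmt9Aux

lemma charpoly_eval (M : Matrix (Fin n) (Fin n) ℂ) (z : ℂ) :
    (Matrix.charpoly M).eval z = (z • (1 : Matrix (Fin n) (Fin n) ℂ) - M).det := by
  rw [Matrix.charpoly, ← Polynomial.coe_evalRingHom, RingHom.map_det]
  congr 1
  ext i j
  by_cases h : i = j
  · subst h
    simp [Matrix.charmatrix_apply_eq, Matrix.one_apply, Matrix.sub_apply, Matrix.smul_apply]
  · simp [Matrix.charmatrix_apply_ne _ _ _ h, Matrix.one_apply_ne h, Matrix.sub_apply,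
      Matrix.smul_apply, Matrix.map_apply]

lemma exists_omega (S : Matrix (Fin n) (Fin n) ℂ) :
    ∃ ω : ℂ, ω * (starRingEnd ℂ) ω = 1 ∧
      IsUnit ((1 + (starRingEnd ℂ) ω • S)).det := by
  set p := Matrix.charpoly (-S) with hp
  have hpne : p ≠ 0 := (Matrix.charpoly_monic _).ne_zero
  have hfin : Set.Finite { x | p.IsRoot x } := Polynomial.finite_setOf_isRoot hpne
  have hinf : Set.Infinite (Set.range cay) := Set.infinite_range_of_injective cay_injective
  obtain ⟨ω, hωmem, hωroot⟩ := (hinf.diff hfin).nonempty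
  obtain ⟨t, rfl⟩ := hωmem
  refine ⟨cay t, cay_mul_conj t, ?_⟩
  have hdet : ((cay t) • (1 : Matrix (Fin n) (Fin n) ℂ) + S).det ≠ 0 := by
    intro h0
    apply hωroot
    show p.IsRoot (cay t)
    rw [Polynomial.IsRoot, charpoly_eval, sub_neg_eq_add, h0]
  have hkey : (1 + (starRingEnd ℂ) (cay t) • S) =
      (starRingEnd ℂ) (cay t) • ((cay t) • (1 : Matrix (Fin n) (Fin n) ℂ) + S) := by
    rw [smul_add, smul_smul, mul_comm, cay_mul_conj t, one_smul]
  rw [hkey, Matrix.det_smul]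
  refine (IsUnit.mul ?_ (Ne.isUnit hdet))
  apply IsUnit.pow
  apply Ne.isUnit
  intro h0
  have := cay_mul_conj t
  rw [h0, mul_zero] at this
  exact one_ne_zero this.symm

end Stmt9Aux

namespace Stmt9Aux

open scoped MatrixOrder ComplexOrder in
lemma psd_eq_of_sq_eq_sq {X Y : Matrix (Fin n) (Fin n) ℂ} (hX : X.PosSemidef)
    (hY : Y.PosSemidef) (h : X ^ 2 = Y ^ 2) : X = Y := by
  rw [← CFC.sqrt_mul_self X hX.nonneg, ← CFC.sqrt_mul_self Y hY.nonneg, ← pow_two, ← pow_two, h]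

open scoped MatrixOrder ComplexOrder in
lemma takagi (l : Fin n → ℝ) (S : Matrix (Fin n) (Fin n) ℂ)
    (hsym : Sᵀ = S) (hU1 : S * Sᴴ = 1) (hU2 : Sᴴ * S = 1) (hsupp : Supp l S) :
    ∃ k : Matrix (Fin n) (Fin n) ℂ, kᴴ * k = 1 ∧ Supp l k ∧ k * kᵀ = S := by
  obtain ⟨ω, hω, hdetN⟩ := exists_omega S
  set c := (starRingEnd ℂ) ω with hc
  set T := c • S with hTdef
  have hcω : c * ω = 1 := by rw [hc, mul_comm]; exact hω
  have hTH : Tᴴ = ω • Sᴴ := by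
    rw [hTdef, Matrix.conjTranspose_smul]
    congr 1
    simp [hc]
  have hTU1 : T * Tᴴ = 1 := by
    rw [hTdef, hTH, smul_mul_smul_comm, hU1, hcω, one_smul]
  have hTU2 : Tᴴ * T = 1 := by
    rw [hTdef, hTH, smul_mul_smul_comm, hU2, mul_comm, hcω, one_smul]
  have hTsym : Tᵀ = T := by rw [hTdef, Matrix.transpose_smul, hsym]
  have hTHT : (Tᴴ)ᵀ = Tᴴ := by
    ext i j
    simp only [Matrix.transpose_apply, Matrix.conjTranspose_apply]
    have e : T i j = T j i := (congrFun (congrFun hTsym i) j).symm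
    rw [e]
  have hTsupp : Supp l T := supp_smul c hsupp
  set N := (1 : Matrix (Fin n) (Fin n) ℂ) + T with hNdef
  set P := (1 : Matrix (Fin n) (Fin n) ℂ) + T + Tᴴ + 1 with hPdef
  have hNH : Nᴴ = 1 + Tᴴ := by rw [hNdef, Matrix.conjTranspose_add, Matrix.conjTranspose_one]
  have hPe : N * Nᴴ = P := by
    rw [hNH, hNdef, hPdef]
    simp only [add_mul, mul_add, one_mul, mul_one, hTU1]
    abel
  have hPe2 : Nᴴ * N = P := by
    rw [hNH, hNdef, hPdef]
    simp only [add_mul, mul_add, one_mul, mul_one, hTU2]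
    abel
  have hP : P.PosSemidef := by
    have h := Matrix.PosSemidef.mul_mul_conjTranspose_same
      (Matrix.PosSemidef.one (n := Fin n) (R := ℂ)) N
    rw [Matrix.mul_one, hPe] at h
    exact h
  have hPdet : IsUnit P.det := by
    rw [← hPe, Matrix.det_mul, Matrix.det_conjTranspose]
    exact hdetN.mul (isUnit_star.mpr hdetN)
  have hPsym : Pᵀ = P := by
    rw [hPdef]
    simp only [Matrix.transpose_add, Matrix.transpose_one, hTsym, hTHT]
  have hPsupp : Supp l P := by
    rw [hPdef]
    exact supp_add (supp_add (supp_add supp_one hTsupp) (supp_conjTranspose hTsupp)) supp_one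
  have hTP : T * P = P * T := by
    rw [hPdef]
    simp only [add_mul, mul_add, one_mul, mul_one, hTU1, hTU2]
  set R := CFC.sqrt P with hRdef
  have hRpsd : R.PosSemidef := (CFC.sqrt_nonneg P).posSemidef
  have hR2 : R * R = P := CFC.sqrt_mul_sqrt_self P hP.nonneg
  have hRH : Rᴴ = R := hRpsd.1
  have hRdet : IsUnit R.det := by
    have h : IsUnit (R.det * R.det) := by rw [← Matrix.det_mul, hR2]; exact hPdet
    exact isUnit_of_mul_isUnit_left h
  -- (starRingEnd ℂ)ugation by a unitary commuting with P fixes R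
  have conj_sqrt : ∀ U : Matrix (Fin n) (Fin n) ℂ, U * Uᴴ = 1 → Uᴴ * U = 1 →
      U * P = P * U → U * R = R * U := by
    intro U hU1' hU2' hUP
    have h1 : (U * R * Uᴴ).PosSemidef := hRpsd.mul_mul_conjTranspose_same U
    have h2 : (U * R * Uᴴ) * (U * R * Uᴴ) = P := by
      have e1 : U * R * Uᴴ * (U * R * Uᴴ) = U * (R * (Uᴴ * U) * R) * Uᴴ := by
        simp only [Matrix.mul_assoc]
      rw [e1, hU2', Matrix.mul_one, hR2, hUP, Matrix.mul_assoc, hU1', Matrix.mul_one]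
    have h3 : U * R * Uᴴ = R := psd_eq_of_sq_eq_sq h1 hRpsd (by rw [pow_two, pow_two, h2, hR2])
    calc U * R = U * R * (Uᴴ * U) := by rw [hU2', Matrix.mul_one]
      _ = (U * R * Uᴴ) * U := by simp only [Matrix.mul_assoc]
      _ = R * U := by rw [h3]
  have hTR : T * R = R * T := conj_sqrt T hTU1 hTU2 hTP
  set V := Matrix.diagonal (fun i => cay (l i)) with hVdef
  have hVH : Vᴴ = Matrix.diagonal (fun i => (starRingEnd ℂ) (cay (l i))) := by
    rw [hVdef, Matrix.diagonal_conjTranspose]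
    rfl
  have hVU1 : V * Vᴴ = 1 := by
    rw [hVH, hVdef, Matrix.diagonal_mul_diagonal]
    have : (fun i => cay (l i) * (starRingEnd ℂ) (cay (l i))) = fun _ => (1 : ℂ) := by
      funext i; exact cay_mul_conj (l i)
    rw [this, Matrix.diagonal_one]
  have hVU2 : Vᴴ * V = 1 := by
    rw [hVH, hVdef, Matrix.diagonal_mul_diagonal]
    have : (fun i => (starRingEnd ℂ) (cay (l i)) * cay (l i)) = fun _ => (1 : ℂ) := by
      funext i; rw [mul_comm]; exact cay_mul_conj (l i)
    rw [this, Matrix.diagonal_one]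
  have hVP : V * P = P * V := (supp_commute hPsupp _ (fun i j h => by rw [h])).symm
  have hVR : V * R = R * V := conj_sqrt V hVU1 hVU2 hVP
  have hRsupp : Supp l R :=
    supp_of_commute (fun i => cay (l i)) (fun i j h e => h (cay_injective e)) hVR.symm
  have hRsym : Rᵀ = R := by
    refine psd_eq_of_sq_eq_sq hRpsd.transpose hRpsd ?_
    rw [pow_two, pow_two, ← Matrix.transpose_mul, hR2, hPsym]
  set Q := R⁻¹ with hQdef
  have hRQ : R * Q = 1 := Matrix.mul_nonsing_inv _ hRdet
  have hQR : Q * R = 1 := Matrix.nonsing_inv_mul _ hRdet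
  have hQH : Qᴴ = Q := by rw [hQdef, Matrix.conjTranspose_nonsing_inv, hRH]
  have hQsym : Qᵀ = Q := by rw [hQdef, Matrix.transpose_nonsing_inv, hRsym]
  have hTQ : T * Q = Q * T := by
    calc T * Q = Q * R * (T * Q) := by rw [hQR, Matrix.one_mul]
      _ = Q * (R * T) * Q := by simp only [Matrix.mul_assoc]
      _ = Q * (T * R) * Q := by rw [hTR]
      _ = Q * T * (R * Q) := by simp only [Matrix.mul_assoc]
      _ = Q * T := by rw [hRQ, Matrix.mul_one]
  have hVQ : V * Q = Q * V := by
    calc V * Q = Q * R * (V * Q) := by rw [hQR, Matrix.one_mul]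
      _ = Q * (R * V) * Q := by simp only [Matrix.mul_assoc]
      _ = Q * (V * R) * Q := by rw [hVR]
      _ = Q * V * (R * Q) := by simp only [Matrix.mul_assoc]
      _ = Q * V := by rw [hRQ, Matrix.mul_one]
  have hQsupp : Supp l Q :=
    supp_of_commute (fun i => cay (l i)) (fun i j h e => h (cay_injective e)) hVQ.symm
  set k₀ := N * Q with hk₀def
  have hNQ : Q * N = N * Q := by
    rw [hNdef, mul_add, add_mul, Matrix.mul_one, Matrix.one_mul, hTQ]
  have hNN : N * N = T * P := by
    rw [hNdef, hPdef]
    simp only [add_mul, mul_add, one_mul, mul_one, hTU1]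
    abel
  have hk₀sq : k₀ * k₀ = T := by
    calc k₀ * k₀ = N * (Q * N) * Q := by rw [hk₀def]; simp only [Matrix.mul_assoc]
      _ = N * (N * Q) * Q := by rw [hNQ]
      _ = N * N * (Q * Q) := by simp only [Matrix.mul_assoc]
      _ = T * (R * R) * (Q * Q) := by rw [hNN, hR2]
      _ = T * (R * (R * Q) * Q) := by simp only [Matrix.mul_assoc]
      _ = T := by rw [hRQ, Matrix.mul_one, hRQ, Matrix.mul_one]
  have hk₀uni : k₀ᴴ * k₀ = 1 := by
    have e1 : k₀ᴴ = Q * Nᴴ := by rw [hk₀def, Matrix.conjTranspose_mul, hQH]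
    calc k₀ᴴ * k₀ = Q * (Nᴴ * N) * Q := by rw [e1, hk₀def]; simp only [Matrix.mul_assoc]
      _ = Q * (R * R) * Q := by rw [hPe2, hR2]
      _ = Q * (R * (R * Q)) := by simp only [Matrix.mul_assoc]
      _ = 1 := by rw [hRQ, Matrix.mul_one, hQR]
  have hk₀sym : k₀ᵀ = k₀ := by
    have e1 : Nᵀ = N := by rw [hNdef, Matrix.transpose_add, Matrix.transpose_one, hTsym]
    rw [hk₀def, Matrix.transpose_mul, hQsym, e1, hNQ]
  have hk₀supp : Supp l k₀ := supp_mul (supp_add supp_one hTsupp) hQsupp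
  obtain ⟨σ, hσ⟩ := IsAlgClosed.exists_pow_nat_eq ω (n := 2) (by norm_num)
  have hσ1 : (starRingEnd ℂ) σ * σ = 1 := by
    have h1 : ((Complex.normSq σ : ℂ)) ^ 2 = 1 := by
      calc ((Complex.normSq σ : ℂ)) ^ 2 = (σ * (starRingEnd ℂ) σ) ^ 2 := by
            rw [Complex.mul_conj]
        _ = σ ^ 2 * (starRingEnd ℂ) (σ ^ 2) := by rw [map_pow]; ring
        _ = 1 := by rw [hσ]; exact hω
    have h2 : (Complex.normSq σ) ^ 2 = 1 := by exact_mod_cast h1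
    have h3 : (Complex.normSq σ - 1) * (Complex.normSq σ + 1) = 0 := by linear_combination h2
    have h4 : Complex.normSq σ = 1 := by
      rcases mul_eq_zero.mp h3 with h | h
      · linarith
      · nlinarith [Complex.normSq_nonneg σ]
    rw [mul_comm, Complex.mul_conj, h4, Complex.ofReal_one]
  refine ⟨σ • k₀, ?_, supp_smul σ hk₀supp, ?_⟩
  · rw [Matrix.conjTranspose_smul, smul_mul_smul_comm, hk₀uni]
    have : (star σ : ℂ) * σ = 1 := hσ1
    rw [this, one_smul]
  · rw [Matrix.transpose_smul, hk₀sym, smul_mul_smul_comm, hk₀sq, hTdef, smul_smul]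
    have e : σ * σ * c = 1 := by rw [← pow_two, hσ, hc]; exact hω
    rw [e, one_smul]

end Stmt9Aux

open Stmt9Aux in
/-- Transitivity claim in Theorem 8.1: for `[[A,B],[−B̄,Ā]] ∈ Sp(n)` with
`AA† = 1/2 + Λ`, `Λ` real diagonal with entries in `(−1/2, 1/2)`, the stabilizer
`U(n)_{iΛ}` moves `ABᵗ` to the standard point: `ABᵗ = k·diag(√(1/4−λᵢ²))·kᵗ`. -/
theorem stmt_9 (n : ℕ) (A B : Matrix (Fin n) (Fin n) ℂ)
    (h1 : Aᴴ * A + Bᵀ * B.map (starRingEnd ℂ) = 1)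
    (h2 : Aᴴ * B = Bᵀ * A.map (starRingEnd ℂ))
    (h3 : A * Aᴴ + B * Bᴴ = 1)
    (h4 : A * Bᵀ = B * Aᵀ)
    (l : Fin n → ℝ) (hl : ∀ i, -(1/2) < l i ∧ l i < 1/2)
    (hAA : A * Aᴴ = (1/2 : ℂ) • 1 + Matrix.diagonal (fun i => (l i : ℂ))) :
    ∃ k : Matrix (Fin n) (Fin n) ℂ,
      kᴴ * k = 1 ∧
      k * Matrix.diagonal (fun i => (l i : ℂ)) =
        Matrix.diagonal (fun i => (l i : ℂ)) * k ∧
      A * Bᵀ = k * Matrix.diagonal (fun i => (Real.sqrt (1/4 - (l i) ^ 2) : ℂ)) * kᵀ := by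
  classical
  set Ω := A * Bᵀ with hΩdef
  set Λm := Matrix.diagonal (fun i => (l i : ℂ)) with hΛdef
  set d : Fin n → ℂ := fun i => (Real.sqrt (1/4 - (l i) ^ 2) : ℂ) with hddef
  set Dm := Matrix.diagonal d with hDdef
  have hlq : ∀ i, (0 : ℝ) < 1/4 - (l i) ^ 2 := by
    intro i; have h := hl i; nlinarith [h.1, h.2]
  have hdne : ∀ i, d i ≠ 0 := by
    intro i
    rw [hddef]
    simp only [Complex.ofReal_ne_zero]
    exact (Real.sqrt_pos.mpr (hlq i)).ne'
  have hd2 : ∀ i, d i * d i = ((1/4 - (l i) ^ 2 : ℝ) : ℂ) := by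
    intro i
    rw [hddef]
    simp only
    rw [← Complex.ofReal_mul, Real.mul_self_sqrt (hlq i).le]
  have hdl : ∀ i j, l i = l j → d i = d j := by
    intro i j h; rw [hddef]; simp only [h]
  -- the (starRingEnd ℂ)ugate of Aᴴ is Aᵀ
  have haux1 : Aᴴ.map (starRingEnd ℂ) = Aᵀ := by
    ext i j
    simp [Matrix.conjTranspose_apply, Matrix.map_apply, Matrix.transpose_apply]
  have hMreal : ((1/2 : ℂ) • 1 + Λm).map (starRingEnd ℂ) = (1/2 : ℂ) • 1 + Λm := by
    ext i j
    by_cases h : i = j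
    · subst h
      simp [hΛdef, Matrix.map_apply, Matrix.add_apply, Matrix.smul_apply, Matrix.one_apply,
        Matrix.diagonal_apply_eq]
      norm_num [map_ofNat]
    · simp [hΛdef, Matrix.map_apply, Matrix.add_apply, Matrix.smul_apply,
        Matrix.one_apply_ne h, Matrix.diagonal_apply_ne _ h]
  have e1 : (A * Aᴴ) * (B * Aᵀ) = (A * Bᵀ) * (A.map (starRingEnd ℂ) * Aᵀ) := by
    calc (A * Aᴴ) * (B * Aᵀ) = A * (Aᴴ * B) * Aᵀ := by simp only [Matrix.mul_assoc]
      _ = A * (Bᵀ * A.map (starRingEnd ℂ)) * Aᵀ := by rw [h2]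
      _ = (A * Bᵀ) * (A.map (starRingEnd ℂ) * Aᵀ) := by simp only [Matrix.mul_assoc]
  have e2 : A.map (starRingEnd ℂ) * Aᵀ = (1/2 : ℂ) • 1 + Λm := by
    have e : (A * Aᴴ).map (starRingEnd ℂ) = A.map (starRingEnd ℂ) * Aᴴ.map (starRingEnd ℂ) := Matrix.map_mul
    rw [haux1] at e
    rw [← e, hAA, hMreal]
  have hMΩ : ((1/2 : ℂ) • 1 + Λm) * Ω = Ω * ((1/2 : ℂ) • 1 + Λm) := by
    have h := e1
    rw [hAA, ← h4, e2, ← hΩdef] at h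
    exact h
  have hcomm : Λm * Ω = Ω * Λm := by
    have h := hMΩ
    rw [add_mul, mul_add, smul_mul_assoc, mul_smul_comm, Matrix.one_mul, Matrix.mul_one] at h
    exact add_left_cancel h
  have hΩsupp : Supp l Ω := by
    intro i j hij
    have h := congrFun (congrFun hcomm i) j
    rw [hΛdef] at h
    rw [Matrix.diagonal_mul, Matrix.mul_diagonal] at h
    have h2' : ((l i : ℂ) - (l j : ℂ)) * Ω i j = 0 := by linear_combination h
    rcases mul_eq_zero.mp h2' with h3 | h3
    · exact absurd (Complex.ofReal_inj.mp (sub_eq_zero.mp h3)) hij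
    · exact h3
  have hΩsym : Ωᵀ = Ω := by
    rw [hΩdef, Matrix.transpose_mul, Matrix.transpose_transpose]
    exact h4.symm.trans hΩdef
  have hBTBc : Bᵀ * B.map (starRingEnd ℂ) = 1 - Aᴴ * A := by
    exact eq_sub_of_add_eq' h1
  have hΩΩH : Ω * Ωᴴ = Matrix.diagonal (fun i => ((1/4 - (l i) ^ 2 : ℝ) : ℂ)) := by
    have e4 : (Bᵀ)ᴴ = B.map (starRingEnd ℂ) := by
      ext i j
      simp [Matrix.conjTranspose_apply, Matrix.transpose_apply, Matrix.map_apply]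
    have hM : (1/2 : ℂ) • 1 + Λm = Matrix.diagonal (fun i => (1/2 : ℂ) + (l i : ℂ)) := by
      rw [hΛdef]
      ext i j
      by_cases h : i = j
      · subst h; simp
      · simp [Matrix.one_apply_ne h, Matrix.diagonal_apply_ne _ h]
    calc Ω * Ωᴴ = A * (Bᵀ * B.map (starRingEnd ℂ)) * Aᴴ := by
          rw [hΩdef, Matrix.conjTranspose_mul, e4]
          simp only [Matrix.mul_assoc]
      _ = A * (1 - Aᴴ * A) * Aᴴ := by rw [hBTBc]
      _ = A * Aᴴ - (A * Aᴴ) * (A * Aᴴ) := by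
          simp only [Matrix.mul_sub, Matrix.sub_mul, Matrix.mul_one]
          simp only [Matrix.mul_assoc]
      _ = Matrix.diagonal (fun i => ((1/4 - (l i) ^ 2 : ℝ) : ℂ)) := by
          rw [hAA, hM, Matrix.diagonal_mul_diagonal, Matrix.diagonal_sub]
          exact congrArg Matrix.diagonal (funext fun i => by push_cast; ring)
  have hΩHΩ : Ωᴴ * Ω = Matrix.diagonal (fun i => ((1/4 - (l i) ^ 2 : ℝ) : ℂ)) := by
    have e5 : Ω.map (starRingEnd ℂ) = Ωᴴ := by
      ext i j
      simp only [Matrix.conjTranspose_apply, Matrix.map_apply, Complex.star_def]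
      have := congrFun (congrFun hΩsym j) i
      rw [Matrix.transpose_apply] at this
      rw [← this]
    have e6 : Ωᴴ.map (starRingEnd ℂ) = Ω := by
      ext i j
      simp only [Matrix.conjTranspose_apply, Matrix.map_apply, Complex.star_def,
        Complex.conj_conj]
      have := congrFun (congrFun hΩsym i) j
      rw [Matrix.transpose_apply] at this
      rw [this]
    have e7 : (Matrix.diagonal (fun i => ((1/4 - (l i) ^ 2 : ℝ) : ℂ))).map (starRingEnd ℂ)
        = Matrix.diagonal (fun i => ((1/4 - (l i) ^ 2 : ℝ) : ℂ)) := by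
      ext i j
      by_cases h : i = j
      · subst h; simp [Matrix.map_apply, Complex.conj_ofReal, map_ofNat]
      · simp [Matrix.map_apply, Matrix.diagonal_apply_ne _ h]
    calc Ωᴴ * Ω = Ω.map (starRingEnd ℂ) * Ωᴴ.map (starRingEnd ℂ) := by rw [e5, e6]
      _ = (Ω * Ωᴴ).map (starRingEnd ℂ) := Matrix.map_mul.symm
      _ = _ := by rw [hΩΩH, e7]
  set E := Matrix.diagonal (fun i => (d i)⁻¹) with hEdef
  have hDE : Dm * E = 1 := by
    rw [hDdef, hEdef, Matrix.diagonal_mul_diagonal]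
    have : (fun i => d i * (d i)⁻¹) = fun _ => (1 : ℂ) := by
      funext i; exact mul_inv_cancel₀ (hdne i)
    rw [this, Matrix.diagonal_one]
  have hED : E * Dm = 1 := by
    rw [hDdef, hEdef, Matrix.diagonal_mul_diagonal]
    have : (fun i => (d i)⁻¹ * d i) = fun _ => (1 : ℂ) := by
      funext i; exact inv_mul_cancel₀ (hdne i)
    rw [this, Matrix.diagonal_one]
  have hDD : Dm * Dm = Matrix.diagonal (fun i => ((1/4 - (l i) ^ 2 : ℝ) : ℂ)) := by
    rw [hDdef, Matrix.diagonal_mul_diagonal]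
    exact congrArg Matrix.diagonal (funext fun i => hd2 i)
  set S := E * Ω with hSdef
  have hΩE : Ω * E = E * Ω :=
    supp_commute hΩsupp _ (fun i j h => by rw [hdl i j h])
  have hΩHE : Ωᴴ * E = E * Ωᴴ :=
    supp_commute (supp_conjTranspose hΩsupp) _ (fun i j h => by rw [hdl i j h])
  have hSsym : Sᵀ = S := by
    rw [hSdef, Matrix.transpose_mul, Matrix.diagonal_transpose, hΩsym, hΩE]
  have hEH : Eᴴ = E := by
    rw [hEdef, Matrix.diagonal_conjTranspose]
    refine congrArg Matrix.diagonal (funext fun i => ?_)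
    show star ((d i)⁻¹) = (d i)⁻¹
    rw [hddef]
    simp [Complex.star_def, map_inv₀, Complex.conj_ofReal]
  have hSH : Sᴴ = Ωᴴ * E := by rw [hSdef, Matrix.conjTranspose_mul, hEH]
  have hSU1 : S * Sᴴ = 1 := by
    calc S * Sᴴ = E * (Ω * Ωᴴ) * E := by rw [hSdef, hSH]; simp only [Matrix.mul_assoc]
      _ = E * (Dm * Dm) * E := by rw [hΩΩH, ← hDD]
      _ = (E * Dm) * (Dm * E) := by simp only [Matrix.mul_assoc]
      _ = 1 := by rw [hED, hDE, Matrix.one_mul]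
  have hSU2 : Sᴴ * S = 1 := by
    calc Sᴴ * S = Ωᴴ * E * E * Ω := by rw [hSdef, hSH]; simp only [Matrix.mul_assoc]
      _ = E * Ωᴴ * E * Ω := by rw [hΩHE]
      _ = E * (Ωᴴ * E) * Ω := by simp only [Matrix.mul_assoc]
      _ = E * (E * Ωᴴ) * Ω := by rw [hΩHE]
      _ = E * E * (Ωᴴ * Ω) := by simp only [Matrix.mul_assoc]
      _ = E * E * (Dm * Dm) := by rw [hΩHΩ, ← hDD]
      _ = E * (E * Dm) * Dm := by simp only [Matrix.mul_assoc]
      _ = 1 := by rw [hED, Matrix.mul_one, hED]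
  have hSsupp : Supp l S := supp_mul (supp_diagonal _) hΩsupp
  obtain ⟨k, hk1, hk2, hk3⟩ := takagi l S hSsym hSU1 hSU2 hSsupp
  refine ⟨k, hk1, ?_, ?_⟩
  · exact supp_commute hk2 _ (fun i j h => by rw [h])
  · have hkD : k * Dm = Dm * k := supp_commute hk2 d hdl
    show Ω = k * Dm * kᵀ
    calc Ω = (Dm * E) * Ω := by rw [hDE, Matrix.one_mul]
      _ = Dm * S := by rw [hSdef, Matrix.mul_assoc]
      _ = Dm * (k * kᵀ) := by rw [hk3]
      _ = (Dm * k) * kᵀ := by rw [Matrix.mul_assoc]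
      _ = k * Dm * kᵀ := by rw [← hkD]
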